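/- arXiv:0811.1395 — 3 statements merged into one kernel-verified Lean document; each statement's English description precedes it below -/
import Mathlib

section
/- Let I be a closed two-sided ideal of a unital C*-algebra A such that both I and A/I have stable rank one. Then A has stable rank one if and only if every unitary in A/I lifts to a unitary in A. -/
lemma my_ring_aux (a b d : ℝ) : a * (b * (d * b)) = (a * b * b) * d := by ring

section helpers
variable {X Y : Type*} [CStarAlgebra X] [PartialOrder X] [StarOrderedRing X]

lemma my_norm_one_le (X : Type*) [CStarAlgebra X] : ‖(1 : X)‖ ≤ 1 := by
  have h : ‖(1:X)‖ = ‖(1:X)‖ * ‖(1:X)‖ := by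
    calc ‖(1:X)‖ = ‖star (1:X) * 1‖ := by rw [star_one, one_mul]
      _ = ‖(1:X)‖ * ‖(1:X)‖ := CStarRing.norm_star_mul_self
  nlinarith [norm_nonneg (1:X)]

lemma my_pos_sq_inj {x y : X} (hx : 0 ≤ x) (hy : 0 ≤ y) (h : x * x = y * y) : x = y := by
  have h' : x ^ 2 = y ^ 2 := by rwa [sq, sq]
  calc x = CFC.sqrt (x ^ 2) := (CFC.sqrt_sq x hx).symm
    _ = CFC.sqrt (y ^ 2) := by rw [h']
    _ = y := CFC.sqrt_sq y hy

lemma my_isUnit_sqrt {x : X} (hx : 0 ≤ x) (hu : IsUnit x) : IsUnit (CFC.sqrt x) := by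
  set s := CFC.sqrt x with hs
  have hsq : s * s = x := by rw [← sq, CFC.sq_sqrt x hx]
  have hcomm : Commute s ↑hu.unit := by
    rw [IsUnit.unit_spec, ← hsq]; exact (Commute.refl s).mul_right (Commute.refl s)
  have hcomm' : Commute s ↑hu.unit⁻¹ := hcomm.units_inv_right
  have h1 : s * (s * ↑hu.unit⁻¹) = 1 := by
    rw [← mul_assoc, hsq]; exact hu.mul_val_inv
  have h2 : (s * ↑hu.unit⁻¹) * s = 1 := by
    rw [mul_assoc, ← hcomm'.eq, ← mul_assoc, hsq]; exact hu.mul_val_inv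
  exact ⟨⟨s, s * ↑hu.unit⁻¹, h1, h2⟩, rfl⟩

variable [CStarAlgebra Y] [PartialOrder Y] [StarOrderedRing Y]

lemma my_map_nonneg (q : X →⋆ₐ[ℂ] Y) {x : X} (hx : 0 ≤ x) : 0 ≤ q x := by
  have hsa : IsSelfAdjoint (CFC.sqrt x) := IsSelfAdjoint.of_nonneg (CFC.sqrt_nonneg x)
  have h1 : x = star (CFC.sqrt x) * CFC.sqrt x := by
    rw [hsa.star_eq, ← sq, CFC.sq_sqrt x hx]
  rw [h1, map_mul, map_star]
  exact star_mul_self_nonneg _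

lemma my_polar {c : X} (hc : IsUnit c) :
    ∃ v ∈ unitary X, c = v * CFC.sqrt (star c * c) := by
  have hpos : (0:X) ≤ star c * c := star_mul_self_nonneg c
  set s := CFC.sqrt (star c * c) with hsdef
  have hs0 : 0 ≤ s := CFC.sqrt_nonneg (star c * c)
  have hssa : IsSelfAdjoint s := .of_nonneg hs0
  have hsq : s * s = star c * c := by rw [← sq]; exact CFC.sq_sqrt _ hpos
  have hcc : IsUnit (star c * c) := hc.star.mul hc
  have hsu : IsUnit s := my_isUnit_sqrt hpos hcc
  set w : X := ↑hsu.unit⁻¹ with hwdef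
  have hws : w * s = 1 := hsu.val_inv_mul
  have hsw : s * w = 1 := hsu.mul_val_inv
  have hwsa : star w = w := by
    have h1 : star w * s = 1 := by
      have := congrArg star hsw
      rwa [star_mul, star_one, hssa.star_eq] at this
    calc star w = star w * (s * w) := by rw [hsw, mul_one]
      _ = (star w * s) * w := (mul_assoc _ _ _).symm
      _ = w := by rw [h1, one_mul]
  refine ⟨c * w, ?_, ?_⟩
  · rw [Unitary.mem_iff]
    constructor
    · calc star (c * w) * (c * w) = (w * star c) * (c * w) := by rw [star_mul, hwsa]
        _ = w * (((star c * c)) * w) := by rw [mul_assoc, mul_assoc]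
        _ = w * ((s * s) * w) := by rw [hsq]
        _ = w * (s * (s * w)) := by rw [mul_assoc]
        _ = 1 := by rw [hsw, mul_one, hws]
    · have hx2 : (w * w) * (star c * c) = 1 := by
        calc (w * w) * (star c * c) = (w * w) * (s * s) := by rw [hsq]
          _ = w * ((w * s) * s) := by rw [mul_assoc, mul_assoc]
          _ = 1 := by rw [hws, one_mul, hws]
      calc (c * w) * star (c * w) = (c * w) * (w * star c) := by rw [star_mul, hwsa]
        _ = c * ((w * w) * star c) := by rw [mul_assoc, mul_assoc]
        _ = (c * ((w * w) * star c)) * (c * ↑hc.unit⁻¹) := by rw [hc.mul_val_inv, mul_one]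
        _ = c * (((w * w) * (star c * c)) * ↑hc.unit⁻¹) := by
              simp only [mul_assoc]
        _ = c * ↑hc.unit⁻¹ := by rw [hx2, one_mul]
        _ = 1 := hc.mul_val_inv

  · rw [mul_assoc, hws, mul_one]

end helpers

set_option maxHeartbeats 2000000 in
/-- Let `I` be a closed two-sided ideal of a unital C*-algebra `A`
(realized by the isometric embedding `ι : I → A`), and let `q : A → B` realize the quotient
`B = A/I`.  If both `I` and `B = A/I` have stable rank one (invertibles are dense, in the
minimal unitization in the non-unital case), then `A` has stable rank one if and only if
every unitary in `A/I` lifts to a unitary in `A`. -/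
theorem stmt1 {I A B : Type*} [NonUnitalCStarAlgebra I] [CStarAlgebra A] [CStarAlgebra B]
    (ι : I →⋆ₙₐ[ℂ] A) (hιisom : Isometry ι)
    (hideal : ∀ (a : A) (x : I), a * ι x ∈ Set.range ι ∧ ι x * a ∈ Set.range ι)
    (q : A →⋆ₐ[ℂ] B) (hqsurj : Function.Surjective q)
    (hker : ∀ a : A, q a = 0 ↔ a ∈ Set.range ι)
    (hI : Dense {x : Unitization ℂ I | IsUnit x})
    (hB : Dense {x : B | IsUnit x}) :
    Dense {x : A | IsUnit x} ↔
      ∀ u ∈ unitary B, ∃ v ∈ unitary A, q v = u := by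
  letI := CStarAlgebra.spectralOrder A
  haveI := CStarAlgebra.spectralOrderedRing A
  letI := CStarAlgebra.spectralOrder B
  haveI := CStarAlgebra.spectralOrderedRing B
  -- the lift of ι to the unitization
  set φ : Unitization ℂ I →⋆ₐ[ℂ] A := Unitization.starLift ι with hφdef
  have hφinr : ∀ x : I, φ (Unitization.inr x) = ι x := fun x => by
    show algebraMap ℂ A (0 : ℂ) + ι x = ι x
    simp
  have hunit_approx : ∀ (z : Unitization ℂ I) (ε : ℝ), 0 < ε →
      ∃ g : A, IsUnit g ∧ ‖g - φ z‖ < ε := by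
    intro z ε hε
    obtain ⟨w, hw, hwz⟩ := Metric.mem_closure_iff.mp (hI z) ε hε
    refine ⟨φ w, hw.map φ, ?_⟩
    calc ‖φ w - φ z‖ = ‖φ (w - z)‖ := by rw [map_sub]
      _ ≤ ‖w - z‖ := NonUnitalStarAlgHom.norm_apply_le φ _
      _ < ε := by rwa [dist_eq_norm, norm_sub_rev] at hwz
  -- the open mapping constant for q
  have hqb : ∀ a : A, ‖q a‖ ≤ 1 * ‖a‖ := fun a => by
    simpa using NonUnitalStarAlgHom.norm_apply_le q a
  let qL : A →L[ℂ] B :=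
    { toLinearMap := q.toLinearMap
      cont := AddMonoidHomClass.continuous_of_bound q 1 hqb }
  have hqLsurj : Function.Surjective qL := hqsurj
  obtain ⟨C, hC0, hC⟩ := ContinuousLinearMap.exists_preimage_norm_le qL hqLsurj
  have hCq : ∀ b : B, ∃ a : A, q a = b ∧ ‖a‖ ≤ C * ‖b‖ := hC
  constructor
  · -- forward direction: dense invertibles in A implies unitaries lift
    intro hdense u hu
    obtain ⟨a₀, ha₀⟩ := hqsurj u
    set ε : ℝ := min (1/2) (1 / (4 * C + 1)) with hεdef
    have hε0 : 0 < ε := by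
      apply lt_min (by norm_num)
      positivity
    have hεhalf : ε ≤ 1/2 := min_le_left _ _
    obtain ⟨c, hcunit, hcd⟩ := Metric.mem_closure_iff.mp (hdense a₀) ε hε0
    have he : ‖q c - u‖ < ε := by
      calc ‖q c - u‖ = ‖q (c - a₀)‖ := by rw [map_sub, ha₀]
        _ ≤ ‖c - a₀‖ := NonUnitalStarAlgHom.norm_apply_le q _
        _ < ε := by rwa [dist_eq_norm, norm_sub_rev] at hcd
    set e : B := q c - u with hedef
    set t : B := -(star u * e) with htdef
    have hte : ‖t‖ = ‖e‖ := by
      rw [htdef, norm_neg]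
      exact CStarRing.norm_mem_unitary_mul e (Unitary.star_mem hu)
    have hnt : ‖t‖ < 1 := by
      rw [hte]; exact he.trans_le (hεhalf.trans (by norm_num))
    have hnt2 : ‖t‖ < 1/2 := by rw [hte]; exact he.trans_le hεhalf
    set ν : Bˣ := Units.oneSub t hnt with hνdef
    have hνval : (ν : B) = 1 - t := rfl
    have hqc : q c = u * ν.val := by
      rw [hνval, htdef, sub_neg_eq_add, mul_add, mul_one, ← mul_assoc,
        (Unitary.mem_iff.mp hu).2, one_mul, hedef]
      abel
    have hνinv : ((ν⁻¹ : Bˣ) : B) = ∑' n : ℕ, t ^ n := rfl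
    have hνinvnorm : ‖((ν⁻¹ : Bˣ) : B)‖ ≤ 2 := by
      rw [hνinv]
      refine (tsum_geometric_le_of_norm_lt_one t hnt).trans ?_
      have h1 : ‖(1:B)‖ ≤ 1 := my_norm_one_le B
      have h2 : (1 - ‖t‖)⁻¹ ≤ 2 := by
        rw [inv_le_comm₀ (by linarith) (by norm_num)]
        linarith
      linarith
    set d : B := ((ν⁻¹ : Bˣ) : B) - 1 with hddef
    have hdeq : d = t * ((ν⁻¹ : Bˣ) : B) := by
      have h : (1 - t) * ((ν⁻¹ : Bˣ) : B) = 1 := by rw [← hνval]; exact ν.mul_inv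
      rw [sub_mul, one_mul] at h
      rw [hddef, ← h]
      abel
    have hdnorm : ‖d‖ < 2 * ε := by
      rw [hdeq]
      calc ‖t * ((ν⁻¹ : Bˣ) : B)‖ ≤ ‖t‖ * ‖((ν⁻¹ : Bˣ) : B)‖ := norm_mul_le _ _
        _ ≤ ‖t‖ * 2 := by
            apply mul_le_mul_of_nonneg_left hνinvnorm (norm_nonneg t)
        _ < ε * 2 := by
            apply mul_lt_mul_of_pos_right _ (by norm_num)
            rw [hte]; exact he
        _ = 2 * ε := by ring
    obtain ⟨m, hqm, hmnorm⟩ := hCq d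
    have hmlt1 : ‖m‖ < 1 := by
      have h1 : C * ‖d‖ < C * (2 * ε) := by
        apply mul_lt_mul_of_pos_left hdnorm hC0
      have h2 : C * (2 * ε) ≤ C * (2 * (1 / (4 * C + 1)))  := by
        apply mul_le_mul_of_nonneg_left _ hC0.le
        have := min_le_right (1/2 : ℝ) (1 / (4 * C + 1))
        rw [← hεdef] at this
        linarith
      have h3 : C * (2 * (1 / (4 * C + 1))) < 1 := by
        rw [mul_one_div, ← mul_div_assoc, div_lt_one (by positivity)]
        linarith
      linarith [hmnorm]
    have h1m : IsUnit (1 + m) := by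
      have := isUnit_one_sub_of_norm_lt_one (x := -m) (by rwa [norm_neg])
      rwa [sub_neg_eq_add] at this
    set c' : A := c * (1 + m) with hc'def
    have hc'unit : IsUnit c' := hcunit.mul h1m
    have hqc' : q c' = u := by
      rw [hc'def, map_mul, map_add, map_one, hqm, hddef, hqc]
      rw [add_sub_cancel, mul_assoc, ν.mul_inv, mul_one]
    clear_value c'
    obtain ⟨v, hv, hfac⟩ := my_polar hc'unit
    refine ⟨v, hv, ?_⟩
    have hqs' : q (CFC.sqrt (star c' * c')) = 1 := by
      have hs0 : (0:A) ≤ CFC.sqrt (star c' * c') := CFC.sqrt_nonneg _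
      have hA : 0 ≤ q (CFC.sqrt (star c' * c')) := my_map_nonneg q hs0
      have h01 : (0:B) ≤ 1 := by simpa using star_mul_self_nonneg (1:B)
      refine my_pos_sq_inj hA h01 ?_
      have hsq : CFC.sqrt (star c' * c') * CFC.sqrt (star c' * c') = star c' * c' := by
        rw [← sq]; exact CFC.sq_sqrt _ (star_mul_self_nonneg c')
      rw [← map_mul, hsq, map_mul, map_star, hqc', (Unitary.mem_iff.mp hu).1, mul_one]
    have := congrArg q hfac
    rw [map_mul, hqs', mul_one, hqc'] at this
    exact this.symm
  · -- reverse direction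
    intro hlift
    rw [Metric.dense_iff]
    intro a ε hε0
    -- we find a unit g with ‖g - a‖ < ε
    suffices h : ∃ g : A, IsUnit g ∧ ‖g - a‖ < ε by
      obtain ⟨g, hg, hga⟩ := h
      exact ⟨g, Metric.mem_ball.mpr (by rwa [dist_eq_norm]), hg⟩
    by_cases hBtriv : Subsingleton B
    · -- trivial quotient: A = I
      obtain ⟨x, hx⟩ := (hker a).mp (Subsingleton.elim _ _)
      obtain ⟨g, hg, hgn⟩ := hunit_approx (Unitization.inr x) ε hε0
      rw [hφinr, hx] at hgn
      exact ⟨g, hg, hgn⟩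
    · haveI : Nontrivial B := not_subsingleton_iff_nontrivial.mp hBtriv
      set ε₁ : ℝ := ε / (2 * (C + 1)) with hε₁def
      have hε₁0 : 0 < ε₁ := by rw [hε₁def]; positivity
      clear_value ε₁
      obtain ⟨b, hbunit, hbd⟩ := Metric.mem_closure_iff.mp (hB (q a)) ε₁ hε₁0
      have hqab : ‖q a - b‖ < ε₁ := by rwa [dist_eq_norm] at hbd
      obtain ⟨u, hu, hbfac⟩ := my_polar hbunit
      set sb : B := CFC.sqrt (star b * b) with hsbdef
      have hsb0 : (0:B) ≤ sb := CFC.sqrt_nonneg (star b * b)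
      have hsbsa : IsSelfAdjoint sb := .of_nonneg hsb0
      have hsbu : IsUnit sb := my_isUnit_sqrt (star_mul_self_nonneg b) (hbunit.star.mul hbunit)
      -- find δ with algebraMap δ ≤ sb
      have hspec : ∀ x ∈ spectrum ℝ sb, 0 < x := by
        intro x hx
        have h1 : 0 ≤ x := spectrum_nonneg_of_nonneg hsb0 hx
        have h2 : x ≠ 0 := by
          rintro rfl
          exact (spectrum.zero_notMem_iff ℝ).mpr hsbu hx
        exact lt_of_le_of_ne h1 (Ne.symm h2)
      obtain ⟨r, hr0, hrle⟩ := (CFC.exists_pos_algebraMap_le_iff (a := sb) hsbsa).mpr hspec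
      -- lift u to a unitary v
      obtain ⟨v, hv, hqv⟩ := hlift u hu
      have hvu : IsUnit v := ⟨Unitary.toUnits ⟨v, hv⟩, rfl⟩
      -- lift sb - algebraMap r to a nonneg p₁
      obtain ⟨t0, ht0⟩ := hqsurj (sb - algebraMap ℝ B r)
      set k : A := (2:ℂ)⁻¹ • (t0 + star t0) with hkdef
      have hksa : IsSelfAdjoint k := by
        rw [hkdef, IsSelfAdjoint, star_smul, star_add, star_star, add_comm]
        norm_num
      have hsbr_sa : IsSelfAdjoint (sb - algebraMap ℝ B r) :=
        hsbsa.sub (IsSelfAdjoint.algebraMap B (IsSelfAdjoint.all r))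
      have hqk : q k = sb - algebraMap ℝ B r := by
        rw [hkdef, map_smul, map_add, map_star, ht0, hsbr_sa.star_eq, ← two_smul ℂ,
          smul_smul]
        norm_num
      have hk2 : (0:A) ≤ k ^ 2 := by
        have h := star_mul_self_nonneg k
        rw [hksa.star_eq, ← sq] at h
        exact h
      set p₁ : A := CFC.sqrt (k ^ 2) with hp₁def
      have hp₁0 : (0:A) ≤ p₁ := CFC.sqrt_nonneg (k ^ 2)
      have hqp₁ : q p₁ = sb - algebraMap ℝ B r := by
        refine my_pos_sq_inj (my_map_nonneg q hp₁0) (sub_nonneg.mpr hrle) ?_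
        have h1 : p₁ * p₁ = k ^ 2 := by rw [← sq, hp₁def, CFC.sq_sqrt _ hk2]
        rw [← map_mul, h1, sq, map_mul, hqk]
      -- p positive invertible lifting sb
      set p : A := algebraMap ℝ A r + p₁ with hpdef
      have halg_nonneg : (0:A) ≤ algebraMap ℝ A r := by
        have hsa' : IsSelfAdjoint (algebraMap ℝ A (Real.sqrt r)) :=
          IsSelfAdjoint.algebraMap A (IsSelfAdjoint.all _)
        have h1 : algebraMap ℝ A r = star (algebraMap ℝ A (Real.sqrt r)) *
            algebraMap ℝ A (Real.sqrt r) := by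
          rw [hsa'.star_eq, ← map_mul, Real.mul_self_sqrt hr0.le]
        rw [h1]
        exact star_mul_self_nonneg _
      have hp0 : (0:A) ≤ p := add_nonneg halg_nonneg hp₁0
      have hpu : IsUnit p := by
        refine CStarAlgebra.isUnit_of_le (algebraMap ℝ A r) ?_
          (((isUnit_iff_ne_zero.mpr hr0.ne').map (algebraMap ℝ A)).isStrictlyPositive halg_nonneg)
        exact le_add_of_nonneg_right hp₁0
      have hqp : q p = sb := by
        have h1 : q (algebraMap ℝ A r) = algebraMap ℝ B r := by
          rw [IsScalarTower.algebraMap_apply ℝ ℂ A, IsScalarTower.algebraMap_apply ℝ ℂ B]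
          exact AlgHomClass.commutes q _
        rw [hpdef, map_add, h1, hqp₁]
        abel
      -- s := sqrt p
      set s : A := CFC.sqrt p with hsdef
      have hssq : s * s = p := by rw [hsdef, ← sq, CFC.sq_sqrt _ hp0]
      have hsu : IsUnit s := my_isUnit_sqrt hp0 hpu
      clear_value s
      set si : A := ↑hsu.unit⁻¹ with hsidef
      have hsis : si * s = 1 := hsu.val_inv_mul
      have hssi : s * si = 1 := hsu.mul_val_inv
      clear_value si
      -- c = v * p lifts b
      set c : A := v * p with hcdef
      have hqc : q c = b := by
        rw [hcdef, map_mul, hqv, hqp, ← hbfac]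
      clear_value k p₁ p c
      -- controlled lift of q (a - c)
      obtain ⟨m, hqm, hmn⟩ := hCq (q (a - c))
      have hmnorm : ‖m‖ < ε / 2 := by
        have h1 : ‖q (a - c)‖ < ε₁ := by rwa [map_sub, hqc]
        have h2 : C * ‖q (a - c)‖ < C * ε₁ := mul_lt_mul_of_pos_left h1 hC0
        have h3 : C * ε₁ < ε / 2 := by
          rw [hε₁def, ← mul_div_assoc, div_lt_div_iff₀ (by positivity) two_pos]
          nlinarith [mul_pos hC0 hε0]
        linarith
      -- the kernel element
      have hker' : q (a - c - m) = 0 := by rw [map_sub, hqm, sub_self]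
      obtain ⟨x, hx⟩ := (hker _).mp hker'
      have hax : a = c + ι x + m := by rw [hx]; abel
      -- c + ι x = v * (s * ((1 + ι x₄) * s))
      obtain ⟨x₂, hx₂⟩ := (hideal (star v) x).1
      obtain ⟨x₃, hx₃⟩ := (hideal si x₂).1
      obtain ⟨x₄, hx₄⟩ := (hideal si x₃).2
      have hfac2 : c + ι x = v * (s * ((1 + ι x₄) * s)) := by
        have h1 : s * ((1 + ι x₄) * s) = p + ι x₂ := by
          rw [add_mul, one_mul, mul_add, hssq, hx₄, hx₃]
          congr 1
          calc s * (si * ι x₂ * si * s) = s * (si * (ι x₂ * (si * s))) := by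
                simp only [mul_assoc]
            _ = s * (si * ι x₂) := by rw [hsis, mul_one]
            _ = (s * si) * ι x₂ := by rw [mul_assoc]
            _ = ι x₂ := by rw [hssi, one_mul]
        rw [h1, mul_add, ← hcdef, hx₂, ← mul_assoc, (Unitary.mem_iff.mp hv).2, one_mul]
      -- approximate 1 + ι x₄ by a unit
      set ε₂ : ℝ := (ε / 2) / (‖v‖ * ‖s‖ * ‖s‖ + 1) with hε₂def
      have hε₂0 : 0 < ε₂ := by rw [hε₂def]; positivity
      clear_value ε₂
      obtain ⟨g, hg, hgn⟩ := hunit_approx (1 + Unitization.inr x₄) ε₂ hε₂0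
      rw [map_add, map_one, hφinr] at hgn
      set G : A := v * (s * (g * s)) with hGdef
      clear_value G
      have hGu : IsUnit G := by rw [hGdef]; exact hvu.mul (hsu.mul (hg.mul hsu))
      refine ⟨G, hGu, ?_⟩
      have hGc : ‖G - (c + ι x)‖ < ε / 2 := by
        have h1 : G - (c + ι x) = v * (s * ((g - (1 + ι x₄)) * s)) := by
          rw [hfac2, hGdef, ← mul_sub, ← mul_sub, ← sub_mul]
        rw [h1]
        calc ‖v * (s * ((g - (1 + ι x₄)) * s))‖
            ≤ ‖v‖ * ‖s * ((g - (1 + ι x₄)) * s)‖ := norm_mul_le _ _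
          _ ≤ ‖v‖ * (‖s‖ * ‖(g - (1 + ι x₄)) * s‖) := by
              apply mul_le_mul_of_nonneg_left (norm_mul_le _ _) (norm_nonneg v)
          _ ≤ ‖v‖ * (‖s‖ * (‖g - (1 + ι x₄)‖ * ‖s‖)) := by
              apply mul_le_mul_of_nonneg_left _ (norm_nonneg v)
              apply mul_le_mul_of_nonneg_left (norm_mul_le _ _) (norm_nonneg s)
          _ = (‖v‖ * ‖s‖ * ‖s‖) * ‖g - (1 + ι x₄)‖ := my_ring_aux _ _ _
          _ ≤ (‖v‖ * ‖s‖ * ‖s‖ + 1) * ‖g - (1 + ι x₄)‖ := by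
              apply mul_le_mul_of_nonneg_right _ (norm_nonneg _)
              nlinarith [norm_nonneg v, norm_nonneg s]
          _ < (‖v‖ * ‖s‖ * ‖s‖ + 1) * ε₂ := by
              apply mul_lt_mul_of_pos_left hgn (by positivity)
          _ = ε / 2 := by
              have hN : ‖v‖ * ‖s‖ * ‖s‖ + 1 ≠ 0 := by positivity
              rw [hε₂def]
              field_simp
      calc ‖G - a‖ = ‖(G - (c + ι x)) - m‖ := by rw [hax]; congr 1; abel
        _ ≤ ‖G - (c + ι x)‖ + ‖m‖ := norm_sub_le _ _
        _ < ε / 2 + ε / 2 := add_lt_add hGc hmnorm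
        _ = ε := by ring
end

section
/- Let H be an infinite-dimensional Hilbert space, A the C*-algebra of 2×2 operator matrices over B(H) with compact off-diagonal entries, and π : A → A/M₂(K(H)) the quotient map. If S and T are isometries on H, then π(diag(S, T*)) is an extremal partial isometry in A/M₂(K(H)), i.e., an extreme point of the closed unit ball of the quotient. -/
noncomputable section

set_option linter.unusedSectionVars false

open ContinuousLinearMap

/-! ### Auxiliary abstract C*-algebra lemmas -/

section Abstract
variable {B : Type*} [CStarAlgebra B]

private lemma myAlgebraMapNonneg [PartialOrder B] [StarOrderedRing B]
    {r : ℝ} (hr : 0 ≤ r) : (0 : B) ≤ algebraMap ℝ B r := by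
  have h : algebraMap ℝ B r = star (Real.sqrt r • (1 : B)) * (Real.sqrt r • 1) := by
    rw [star_smul, star_one, smul_mul_smul_comm, star_trivial (Real.sqrt r),
      Real.mul_self_sqrt hr, mul_one, Algebra.algebraMap_eq_smul_one]
  rw [h]
  exact star_mul_self_nonneg _

private lemma le_algebraMap_of_norm_le [PartialOrder B] [StarOrderedRing B]
    (y : B) {r : ℝ} (h : ‖y‖ * ‖y‖ ≤ r) : star y * y ≤ algebraMap ℝ B r := by
  calc star y * y ≤ algebraMap ℝ B ‖star y * y‖ :=
        IsSelfAdjoint.le_algebraMap_norm_self (IsSelfAdjoint.star_mul_self y)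
    _ ≤ algebraMap ℝ B r := by
        rw [← sub_nonneg, ← map_sub]
        exact myAlgebraMapNonneg (by rw [CStarRing.norm_star_mul_self]; linarith)

/-- Key algebraic identity. -/
private lemma key_id (x₁ x₂ : B) (a b : ℝ) (hab : a + b = 1) :
    star (a • x₁ + b • x₂) * (a • x₁ + b • x₂)
      + (a * b) • (star (x₁ - x₂) * (x₁ - x₂))
      = a • (star x₁ * x₁) + b • (star x₂ * x₂) := by
  have hb : b = 1 - a := by linarith
  subst hb
  simp only [star_add, star_smul, star_sub, add_mul, mul_add, sub_mul, mul_sub,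
    smul_mul_assoc, mul_smul_comm, smul_sub, smul_add, smul_smul, star_trivial]
  module

private lemma corner_zero (z₁ z₂ : B) (h₁ : ‖z₁‖ ≤ 1) (h₂ : ‖z₂‖ ≤ 1)
    (a b : ℝ) (ha : 0 < a) (hb : 0 < b) (hab : a + b = 1)
    (hw : (a • z₁ + b • z₂) * star (a • z₁ + b • z₂) * (a • z₁ + b • z₂)
        = a • z₁ + b • z₂) :
    (z₁ - z₂) * (star (a • z₁ + b • z₂) * (a • z₁ + b • z₂)) = 0 := by
  letI := CStarAlgebra.spectralOrder B
  haveI := CStarAlgebra.spectralOrderedRing B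
  set w := a • z₁ + b • z₂ with hwdef
  set p := star w * w with hpdef
  have hpsa : star p = p := by simp [hpdef, star_mul]
  have hpp : p * p = p := by
    rw [hpdef]
    calc (star w * w) * (star w * w) = star w * (w * star w * w) := by noncomm_ring
      _ = star w * w := by rw [hw]
  set c := Real.sqrt (a * b) • (z₁ - z₂) with hcdef
  have hcc : star c * c = (a * b) • (star (z₁ - z₂) * (z₁ - z₂)) := by
    rw [hcdef, star_smul, star_trivial, smul_mul_smul_comm,
      Real.mul_self_sqrt (by positivity)]
  have hkey : star w * w + star c * c = a • (star z₁ * z₁) + b • (star z₂ * z₂) := by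
    rw [hcc]; exact key_id z₁ z₂ a b hab
  have hy₁ : a • (star z₁ * z₁) = star (Real.sqrt a • z₁) * (Real.sqrt a • z₁) := by
    rw [star_smul, smul_mul_smul_comm, star_trivial (Real.sqrt a), Real.mul_self_sqrt ha.le]
  have hy₂ : b • (star z₂ * z₂) = star (Real.sqrt b • z₂) * (Real.sqrt b • z₂) := by
    rw [star_smul, smul_mul_smul_comm, star_trivial (Real.sqrt b), Real.mul_self_sqrt hb.le]
  have hle : star w * w + star c * c ≤ 1 := by
    rw [hkey, hy₁, hy₂]
    have e₁ : star (Real.sqrt a • z₁) * (Real.sqrt a • z₁) ≤ algebraMap ℝ B a := by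
      apply le_algebraMap_of_norm_le
      have : ‖Real.sqrt a • z₁‖ = Real.sqrt a * ‖z₁‖ := by
        rw [norm_smul, Real.norm_eq_abs, abs_of_nonneg (Real.sqrt_nonneg a)]
      rw [this]
      have h0 : 0 ≤ ‖z₁‖ := norm_nonneg _
      calc Real.sqrt a * ‖z₁‖ * (Real.sqrt a * ‖z₁‖)
          = (Real.sqrt a * Real.sqrt a) * (‖z₁‖ * ‖z₁‖) := by ring
        _ = a * (‖z₁‖ * ‖z₁‖) := by rw [Real.mul_self_sqrt ha.le]
        _ ≤ a * 1 := by nlinarith [mul_le_mul h₁ h₁ h0 zero_le_one]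
        _ = a := mul_one a
    have e₂ : star (Real.sqrt b • z₂) * (Real.sqrt b • z₂) ≤ algebraMap ℝ B b := by
      apply le_algebraMap_of_norm_le
      have : ‖Real.sqrt b • z₂‖ = Real.sqrt b * ‖z₂‖ := by
        rw [norm_smul, Real.norm_eq_abs, abs_of_nonneg (Real.sqrt_nonneg b)]
      rw [this]
      have h0 : 0 ≤ ‖z₂‖ := norm_nonneg _
      calc Real.sqrt b * ‖z₂‖ * (Real.sqrt b * ‖z₂‖)
          = (Real.sqrt b * Real.sqrt b) * (‖z₂‖ * ‖z₂‖) := by ring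
        _ = b * (‖z₂‖ * ‖z₂‖) := by rw [Real.mul_self_sqrt hb.le]
        _ ≤ b * 1 := by nlinarith [mul_le_mul h₂ h₂ h0 zero_le_one]
        _ = b := mul_one b
    calc star (Real.sqrt a • z₁) * (Real.sqrt a • z₁)
          + star (Real.sqrt b • z₂) * (Real.sqrt b • z₂)
        ≤ algebraMap ℝ B a + algebraMap ℝ B b := add_le_add e₁ e₂
      _ = 1 := by rw [← map_add, hab, map_one]
  have hconj := star_left_conjugate_le_conjugate hle p
  rw [hpsa] at hconj
  have hsimp : p * (star w * w + star c * c) * p = p + p * (star c * c) * p := by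
    rw [← hpdef]
    calc p * (p + star c * c) * p = p * p * p + p * (star c * c) * p := by noncomm_ring
      _ = p + p * (star c * c) * p := by rw [hpp, hpp]
  rw [hsimp, mul_one, hpp] at hconj
  have hneg : p * (star c * c) * p ≤ 0 := by
    have := add_le_add_right hconj (-p)
    simpa using this
  have hpos : (0 : B) ≤ p * (star c * c) * p := by
    have : p * (star c * c) * p = star (c * p) * (c * p) := by
      rw [star_mul, hpsa]; noncomm_ring
    rw [this]; exact star_mul_self_nonneg _
  have hzero : star (c * p) * (c * p) = 0 := by
    have h0 : p * (star c * c) * p = 0 := le_antisymm hneg hpos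
    rw [← h0, star_mul, hpsa]; noncomm_ring
  have hcp : c * p = 0 := by
    have hn : ‖c * p‖ * ‖c * p‖ = 0 := by
      rw [← CStarRing.norm_star_mul_self, hzero, norm_zero]
    have : ‖c * p‖ = 0 := by nlinarith [norm_nonneg (c * p)]
    exact norm_eq_zero.mp this
  have hne : Real.sqrt (a * b) ≠ 0 := by positivity
  have : Real.sqrt (a * b) • ((z₁ - z₂) * p) = 0 := by
    rw [← smul_mul_assoc, ← hcdef, hcp]
  rcases smul_eq_zero.mp this with h | h
  · exact absurd h hne
  · exact h

/-- Abstract extremality criterion: a partial isometry `u` in a unital C*-algebra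
with `(1 - u u*) B (1 - u* u) = 0` is an extreme point of the closed unit ball. -/
private lemma extreme_of_rel (u : B)
    (hrel : u * star u * u = u)
    (hcorner : ∀ y : B, (1 - u * star u) * y * (1 - star u * u) = 0) :
    u ∈ Set.extremePoints ℝ (Metric.closedBall (0 : B) 1) := by
  have hnorm : ‖u‖ ≤ 1 := by
    have h1 : ‖u‖ * ‖u‖ = ‖star u * u‖ := (CStarRing.norm_star_mul_self).symm
    have hpp : (star u * u) * (star u * u) = star u * u := by
      calc (star u * u) * (star u * u) = star u * (u * star u * u) := by noncomm_ring
        _ = star u * u := by rw [hrel]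
    have hpsa : star (star u * u) = star u * u := by rw [star_mul, star_star]
    have h2 : ‖star u * u‖ * ‖star u * u‖ = ‖star u * u‖ := by
      conv_lhs => rw [← CStarRing.norm_star_mul_self]
      rw [hpsa, hpp]
    by_contra hcon
    push_neg at hcon
    have ht : 1 < ‖u‖ * ‖u‖ := by nlinarith
    rw [h1] at ht
    nlinarith
  constructor
  · simpa using hnorm
  rintro x₁ hx₁ x₂ hx₂ hseg
  rw [openSegment, Set.mem_setOf_eq] at hseg
  obtain ⟨a, b, ha, hb, hab, huv⟩ := hseg
  simp only [Metric.mem_closedBall, dist_zero_right] at hx₁ hx₂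
  have hw1 : (a • x₁ + b • x₂) * star (a • x₁ + b • x₂) * (a • x₁ + b • x₂)
      = a • x₁ + b • x₂ := by rw [huv]; exact hrel
  have hd_p : (x₁ - x₂) * (star (a • x₁ + b • x₂) * (a • x₁ + b • x₂)) = 0 :=
    corner_zero x₁ x₂ hx₁ hx₂ a b ha hb hab hw1
  rw [huv] at hd_p
  have hsu : a • star x₁ + b • star x₂ = star u := by
    rw [← huv]; simp [star_add, star_smul]
  have hw2 : (a • star x₁ + b • star x₂) * star (a • star x₁ + b • star x₂)
      * (a • star x₁ + b • star x₂) = a • star x₁ + b • star x₂ := by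
    rw [hsu, star_star]
    calc star u * u * star u = star (u * star u * u) := by simp [star_mul, mul_assoc]
      _ = star u := by rw [hrel]
  have hd_e' : (star x₁ - star x₂) * (star (a • star x₁ + b • star x₂)
      * (a • star x₁ + b • star x₂)) = 0 :=
    corner_zero (star x₁) (star x₂) (by simpa using hx₁) (by simpa using hx₂)
      a b ha hb hab hw2
  rw [hsu, star_star] at hd_e'
  have he_d : (u * star u) * (x₁ - x₂) = 0 := by
    have := congrArg star hd_e'
    simpa [star_mul, star_sub, star_star, mul_assoc] using this
  have hd : x₁ - x₂ = 0 := by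
    have hx : (1 - u * star u) * (x₁ - x₂) * (1 - star u * u) = x₁ - x₂ := by
      have h1 : (1 - u * star u) * (x₁ - x₂) = x₁ - x₂ := by
        rw [sub_mul, one_mul, he_d, sub_zero]
      rw [h1, mul_sub, mul_one, hd_p, sub_zero]
    rw [← hx, hcorner]
  have hx12 : x₁ = x₂ := by rwa [sub_eq_zero] at hd
  have hx1u : x₁ = u := by
    rw [← huv, hx12, ← add_smul, hab, one_smul]
  exact hx1u

end Abstract

/-! ### The 2×2 operator matrix setup -/

/-- The Hilbert space direct sum `H ⊕ H`. -/
abbrev HilbertSum (H : Type*) [NormedAddCommGroup H] [InnerProductSpace ℂ H] :=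
  WithLp 2 (H × H)

variable (H : Type*) [NormedAddCommGroup H] [InnerProductSpace ℂ H] [CompleteSpace H]

/-- The canonical continuous linear identification of `H ⊕ H` with `H × H`. -/
def hSumEquiv : HilbertSum H ≃L[ℂ] H × H := WithLp.prodContinuousLinearEquiv 2 ℂ H H

/-- The `(1,1)` entry of a bounded operator on `H ⊕ H`, viewed as a 2×2 operator matrix. -/
def entry11 (T : HilbertSum H →L[ℂ] HilbertSum H) : H →L[ℂ] H :=
  fst ℂ H H ∘L (hSumEquiv H).toContinuousLinearMap ∘L T ∘L
    (hSumEquiv H).symm.toContinuousLinearMap ∘L inl ℂ H H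

/-- The `(1,2)` entry of a bounded operator on `H ⊕ H`, viewed as a 2×2 operator matrix. -/
def entry12 (T : HilbertSum H →L[ℂ] HilbertSum H) : H →L[ℂ] H :=
  fst ℂ H H ∘L (hSumEquiv H).toContinuousLinearMap ∘L T ∘L
    (hSumEquiv H).symm.toContinuousLinearMap ∘L inr ℂ H H

/-- The `(2,1)` entry of a bounded operator on `H ⊕ H`, viewed as a 2×2 operator matrix. -/
def entry21 (T : HilbertSum H →L[ℂ] HilbertSum H) : H →L[ℂ] H :=
  snd ℂ H H ∘L (hSumEquiv H).toContinuousLinearMap ∘L T ∘L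
    (hSumEquiv H).symm.toContinuousLinearMap ∘L inl ℂ H H

/-- The `(2,2)` entry of a bounded operator on `H ⊕ H`, viewed as a 2×2 operator matrix. -/
def entry22 (T : HilbertSum H →L[ℂ] HilbertSum H) : H →L[ℂ] H :=
  snd ℂ H H ∘L (hSumEquiv H).toContinuousLinearMap ∘L T ∘L
    (hSumEquiv H).symm.toContinuousLinearMap ∘L inr ℂ H H

/-- The 2×2 diagonal operator matrix `diag(S, T') : H ⊕ H → H ⊕ H`. -/
def diagOp (S T' : H →L[ℂ] H) : HilbertSum H →L[ℂ] HilbertSum H :=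
  (hSumEquiv H).symm.toContinuousLinearMap ∘L S.prodMap T' ∘L
    (hSumEquiv H).toContinuousLinearMap

private lemma diagOp_mul (A B' C D' : H →L[ℂ] H) :
    diagOp H A B' * diagOp H C D' = diagOp H (A * C) (B' * D') := by
  ext x
  simp [diagOp, mul_apply, Prod.map]

private lemma diagOp_one : diagOp H 1 1 = 1 := by
  ext x
  simp [diagOp, Prod.map, ContinuousLinearMap.one_apply]

private lemma diagOp_sub (A B' C D' : H →L[ℂ] H) :
    diagOp H A B' - diagOp H C D' = diagOp H (A - C) (B' - D') := by
  ext x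
  simp only [diagOp, coe_comp', ContinuousLinearEquiv.coe_coe, Function.comp_apply,
    ContinuousLinearMap.sub_apply, ← map_sub, coe_prodMap', Prod.map, Prod.mk_sub_mk]

private lemma diagOp_star (A B' : H →L[ℂ] H) :
    star (diagOp H A B') = diagOp H (star A) (star B') := by
  rw [star_eq_adjoint, star_eq_adjoint, star_eq_adjoint]
  symm
  rw [ContinuousLinearMap.eq_adjoint_iff]
  intro x y
  simp [diagOp, WithLp.prod_inner_apply, hSumEquiv, ContinuousLinearMap.adjoint_inner_left]

private lemma entry11_conj (A B' C D' : H →L[ℂ] H) (w : HilbertSum H →L[ℂ] HilbertSum H) :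
    entry11 H (diagOp H A B' * w * diagOp H C D') = A ∘L entry11 H w ∘L C := by
  ext x
  simp [entry11, diagOp, Prod.map, mul_apply]

private lemma entry12_conj (A B' C D' : H →L[ℂ] H) (w : HilbertSum H →L[ℂ] HilbertSum H) :
    entry12 H (diagOp H A B' * w * diagOp H C D') = A ∘L entry12 H w ∘L D' := by
  ext x
  simp [entry12, diagOp, Prod.map, mul_apply]

private lemma entry21_conj (A B' C D' : H →L[ℂ] H) (w : HilbertSum H →L[ℂ] HilbertSum H) :
    entry21 H (diagOp H A B' * w * diagOp H C D') = B' ∘L entry21 H w ∘L C := by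
  ext x
  simp [entry21, diagOp, Prod.map, mul_apply]

private lemma entry22_conj (A B' C D' : H →L[ℂ] H) (w : HilbertSum H →L[ℂ] HilbertSum H) :
    entry22 H (diagOp H A B' * w * diagOp H C D') = B' ∘L entry22 H w ∘L D' := by
  ext x
  simp [entry22, diagOp, Prod.map, mul_apply]

set_option maxHeartbeats 2000000 in
/-- Let `H` be an infinite-dimensional Hilbert space, `𝒜` the
*-subalgebra of `B(H ⊕ H)` of 2×2 operator matrices with compact off-diagonal entries, and
`q : 𝒜 → B` realize the quotient of `𝒜` by `M₂(K(H))`.  If `S` and `T` are isometries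
on `H`, then the image under `q` of `diag(S, T*)` is an extremal partial isometry
(extreme point of the closed unit ball) in the quotient. -/
theorem stmt11 (hH : ¬ FiniteDimensional ℂ H)
    (𝒜 : StarSubalgebra ℂ (HilbertSum H →L[ℂ] HilbertSum H))
    (h𝒜 : ∀ T, T ∈ 𝒜 ↔
      (IsCompactOperator ⇑(entry12 H T) ∧ IsCompactOperator ⇑(entry21 H T)))
    (B : Type*) [CStarAlgebra B]
    (q : 𝒜 →⋆ₐ[ℂ] B) (hqsurj : Function.Surjective q)
    (hqker : ∀ T : 𝒜, q T = 0 ↔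
      (IsCompactOperator ⇑(entry11 H (T : HilbertSum H →L[ℂ] HilbertSum H)) ∧
       IsCompactOperator ⇑(entry12 H (T : HilbertSum H →L[ℂ] HilbertSum H)) ∧
       IsCompactOperator ⇑(entry21 H (T : HilbertSum H →L[ℂ] HilbertSum H)) ∧
       IsCompactOperator ⇑(entry22 H (T : HilbertSum H →L[ℂ] HilbertSum H))))
    (S T : H →L[ℂ] H) (hS : star S * S = 1) (hT : star T * T = 1)
    (D : 𝒜) (hD : (D : HilbertSum H →L[ℂ] HilbertSum H) = diagOp H S (star T)) :
    q D ∈ Set.extremePoints ℝ (Metric.closedBall (0 : B) 1) := by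
  have hDstar : ((star D : 𝒜) : HilbertSum H →L[ℂ] HilbertSum H)
      = diagOp H (star S) T := by
    rw [StarMemClass.coe_star, hD, diagOp_star, star_star]
  have hDDD : D * star D * D = D := by
    apply Subtype.ext
    rw [MulMemClass.coe_mul, MulMemClass.coe_mul, hDstar, hD, diagOp_mul, diagOp_mul,
      mul_assoc S, hS, mul_one, hT, one_mul]
  have hrel : q D * star (q D) * q D = q D := by
    have := congrArg q hDDD
    simpa [map_mul, map_star] using this
  have hcorner : ∀ y : B, (1 - q D * star (q D)) * y * (1 - star (q D) * q D) = 0 := by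
    intro y
    obtain ⟨W, rfl⟩ := hqsurj y
    have hq : (1 - q D * star (q D)) * q W * (1 - star (q D) * q D)
        = q ((1 - D * star D) * W * (1 - star D * D)) := by
      simp [map_mul, map_sub, map_one, map_star]
    rw [hq, hqker]
    have h1 : ((1 - D * star D : 𝒜) : HilbertSum H →L[ℂ] HilbertSum H)
        = diagOp H (1 - S * star S) 0 := by
      rw [AddSubgroupClass.coe_sub, OneMemClass.coe_one, MulMemClass.coe_mul, hDstar, hD,
        diagOp_mul, ← diagOp_one H, diagOp_sub, hT, sub_self]
    have h2 : ((1 - star D * D : 𝒜) : HilbertSum H →L[ℂ] HilbertSum H)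
        = diagOp H 0 (1 - T * star T) := by
      rw [AddSubgroupClass.coe_sub, OneMemClass.coe_one, MulMemClass.coe_mul, hDstar, hD,
        diagOp_mul, ← diagOp_one H, diagOp_sub, hS, sub_self]
    have hcoe : (((1 - D * star D) * W * (1 - star D * D) : 𝒜) :
        HilbertSum H →L[ℂ] HilbertSum H)
        = diagOp H (1 - S * star S) 0 * (W : HilbertSum H →L[ℂ] HilbertSum H)
          * diagOp H 0 (1 - T * star T) := by
      rw [MulMemClass.coe_mul, MulMemClass.coe_mul, h1, h2]
    have hW12 : IsCompactOperator ⇑(entry12 H (W : HilbertSum H →L[ℂ] HilbertSum H)) :=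
      ((h𝒜 _).mp W.2).1
    refine ⟨?_, ?_, ?_, ?_⟩
    · rw [hcoe, entry11_conj, comp_zero]
      simpa using isCompactOperator_zero
    · rw [hcoe, entry12_conj]
      simp only [coe_comp']
      exact (hW12.comp_clm (1 - T * star T)).clm_comp (1 - S * star S)
    · rw [hcoe, entry21_conj, comp_zero, zero_comp]
      simpa using isCompactOperator_zero
    · rw [hcoe, entry22_conj, zero_comp]
      simpa using isCompactOperator_zero
  exact extreme_of_rel (q D) hrel hcorner

end
end

section
/- Let I be a closed two-sided ideal of a unital C*-algebra A and suppose I has an approximate identity consisting of projections. Then every unitary in A/I lifts to a partial isometry in A. -/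
lemma proj_norm_le_one {A : Type*} [NonUnitalCStarAlgebra A] {p : A}
    (hstar : star p = p) (hmul : p * p = p) : ‖p‖ ≤ 1 := by
  have h : ‖p‖ * ‖p‖ = ‖p‖ := by
    calc ‖p‖ * ‖p‖ = ‖star p * p‖ := (CStarRing.norm_star_mul_self).symm
    _ = ‖p‖ := by rw [hstar, hmul]
  nlinarith [norm_nonneg p]

/-- Let `I` be a closed two-sided ideal of a unital C*-algebra `A`
(realized by the isometric embedding `ι : I → A`), with `q : A → B` realizing the quotient
`B = A/I`.  Suppose `I` has an approximate identity consisting of projections, i.e. a net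
`(e l)` of projections with `e l * a → a` for all `a ∈ I`.  Then every unitary in `A/I`
lifts to a partial isometry in `A`. -/
theorem stmt13 {I A B : Type*} [NonUnitalCStarAlgebra I] [CStarAlgebra A] [CStarAlgebra B]
    (ι : I →⋆ₙₐ[ℂ] A) (hιisom : Isometry ι)
    (hideal : ∀ (a : A) (x : I), a * ι x ∈ Set.range ι ∧ ι x * a ∈ Set.range ι)
    (q : A →⋆ₐ[ℂ] B) (hqsurj : Function.Surjective q)
    (hker : ∀ a : A, q a = 0 ↔ a ∈ Set.range ι)
    (Λ : Type*) [Nonempty Λ] [Preorder Λ] [IsDirected Λ (· ≤ ·)]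
    (e : Λ → I)
    (hproj : ∀ l, star (e l) = e l ∧ e l * e l = e l)
    (happrox : ∀ a : I, Filter.Tendsto (fun l => e l * a) Filter.atTop (nhds a)) :
    ∀ u ∈ unitary B, ∃ v : A, v * star v * v = v ∧ q v = u := by
  intro u hu
  rcases subsingleton_or_nontrivial B with hB | hB
  · exact ⟨0, by simp, Subsingleton.elim _ _⟩
  have hAnt : Nontrivial A :=
    ⟨0, 1, fun h01 => zero_ne_one (α := B) (by rw [← map_zero q, ← map_one q, h01])⟩
  have hqcont : Continuous q :=
    AddMonoidHomClass.continuous_of_bound q 1 fun a => by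
      simpa using NonUnitalStarAlgHom.norm_apply_le q a
  obtain ⟨a, ha⟩ := hqsurj u
  have hu1 : star u * u = 1 := (Unitary.mem_iff.mp hu).1
  set c : A := star a * a - 1 with hc
  have hqc : q c = 0 := by
    simp [hc, map_sub, map_mul, map_star, ha, hu1]
  obtain ⟨x, hx⟩ := (hker c).mp hqc
  have hcsa : star c = c := by
    simp [hc, star_sub, star_mul, star_star, mul_assoc]
  -- pick l with small remainder
  have hev : ∀ᶠ l in Filter.atTop, ‖e l * x - x‖ < 1/4 := by
    have := (happrox x).eventually (Metric.ball_mem_nhds x (by norm_num : (0:ℝ) < 1/4))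
    filter_upwards [this] with l hl
    simpa [dist_eq_norm] using hl
  obtain ⟨l, hl⟩ := hev.exists
  set p : A := ι (e l) with hp
  have hpstar : star p = p := by rw [hp, ← map_star, (hproj l).1]
  have hpp : p * p = p := by rw [hp, ← map_mul, (hproj l).2]
  have hpnorm : ‖p‖ ≤ 1 := proj_norm_le_one hpstar hpp
  have hqp : q p = 0 := (hker p).mpr ⟨e l, rfl⟩
  set g : A := 1 - p with hg
  have hgg : g * g = g := by simp [hg, mul_sub, sub_mul, hpp]
  have hgstar : star g = g := by simp [hg, hpstar]
  set d : A := g * c * g with hd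
  have hdsa : star d = d := by
    simp [hd, star_mul, hgstar, hcsa, mul_assoc]
  -- norm of d
  have hιnorm : ∀ y : I, ‖ι y‖ = ‖y‖ := fun y =>
    hιisom.norm_map_of_map_zero (map_zero ι) y
  have hcpc : ‖c - p * c‖ < 1/4 := by
    have : c - p * c = ι (x - e l * x) := by
      rw [map_sub, map_mul, hx, hp]
    rw [this, hιnorm]
    simpa [norm_sub_rev] using hl
  have hdnorm : ‖d‖ < 1/2 := by
    have hdeq : d = (c - p * c) - (c - p * c) * p := by
      simp only [hd, hg, sub_mul, mul_sub, one_mul, mul_one]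
    have h1 : ‖d‖ ≤ ‖c - p * c‖ + ‖(c - p * c) * p‖ := hdeq ▸ norm_sub_le _ _
    have h2 : ‖(c - p * c) * p‖ ≤ ‖c - p * c‖ * ‖p‖ := norm_mul_le _ _
    nlinarith [norm_nonneg (c - p * c), norm_nonneg p]
  set s : A := 1 + d with hs
  have hssa : IsSelfAdjoint s := by
    rw [IsSelfAdjoint, hs, star_add, star_one, hdsa]
  have hqd : q d = 0 := by simp [hd, map_mul, hqc]
  have hqs : q s = 1 := by simp [hs, map_add, hqd]
  have hsp : s * p = p := by
    have hdp : d * p = 0 := by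
      have : g * p = 0 := by simp [hg, sub_mul, hpp]
      rw [hd, mul_assoc, this, mul_zero]
    rw [hs, add_mul, one_mul, hdp, add_zero]
  -- spectrum of s is positive
  have hspec : ∀ t ∈ spectrum ℝ s, (0:ℝ) < t := by
    intro t ht
    have h1 : t - 1 ∈ spectrum ℝ (s - algebraMap ℝ A 1) := by
      rw [← spectrum.sub_singleton_eq]
      exact Set.sub_mem_sub ht rfl
    have h2 : s - algebraMap ℝ A 1 = d := by
      rw [map_one, hs, add_sub_cancel_left]
    rw [h2] at h1
    have h3 : ‖t - 1‖ ≤ ‖d‖ := spectrum.norm_le_norm_of_mem h1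
    rw [Real.norm_eq_abs] at h3
    have := abs_lt.mp (lt_of_le_of_lt h3 hdnorm)
    linarith [this.1]
  set f : ℝ → ℝ := fun t => (Real.sqrt t)⁻¹ with hf
  have hfc : ContinuousOn f (spectrum ℝ s) := by
    apply ContinuousOn.inv₀ (Real.continuous_sqrt.continuousOn)
    intro t ht
    exact ne_of_gt (Real.sqrt_pos.mpr (hspec t ht))
  set r : A := cfc f s with hr
  have hrsa : IsSelfAdjoint r := cfc_predicate f s
  -- key identity r * r * s = 1
  have key1 : r * r * s = 1 := by
    calc r * r * s = cfc f s * cfc f s * cfc (fun t : ℝ => t) s := by rw [cfc_id' ℝ s]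
      _ = cfc (fun t : ℝ => f t * f t * t) s := by
          rw [cfc_mul (fun t : ℝ => f t * f t) (fun t : ℝ => t) s (hfc.mul hfc) (by fun_prop),
            cfc_mul f f s hfc hfc]
      _ = cfc (fun _ : ℝ => (1:ℝ)) s := by
          apply cfc_congr
          intro t ht
          have h0 : 0 < t := hspec t ht
          simp only [hf]
          rw [← mul_inv, Real.mul_self_sqrt h0.le, inv_mul_cancel₀ h0.ne']
      _ = 1 := by rw [cfc_const (1:ℝ) s hssa, map_one]
  have key4 : r * r * p = p := by
    conv_lhs => rw [← hsp, ← mul_assoc]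
    rw [key1, one_mul]
  -- q r = 1
  have hqr : q r = 1 := by
    have h1 : q r = cfc f (q s) := StarAlgHom.map_cfc q f s hfc hqcont hssa
      (by rw [hqs]; exact IsSelfAdjoint.one B)
    rw [h1, hqs]
    calc cfc f (1 : B) = cfc (fun _ : ℝ => (1:ℝ)) (1 : B) := by
          apply cfc_congr
          intro t ht
          rw [spectrum.one_eq] at ht
          simp only [Set.mem_singleton_iff] at ht
          simp [hf, ht]
      _ = 1 := by rw [cfc_const (1:ℝ) (1:B) (IsSelfAdjoint.one B), map_one]
  refine ⟨a * g * r, ?_, ?_⟩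
  · -- partial isometry
    have hstarv : star (a * g * r) = r * g * star a := by
      simp only [star_mul, hrsa.star_eq, hgstar, mul_assoc]
    have hmid : g * (star a * a) * g = s - p := by
      have hsaa : star a * a = 1 + c := by rw [hc]; abel
      rw [hsaa, mul_add, add_mul, mul_one, hgg, hs, hg]
      abel
    calc a * g * r * star (a * g * r) * (a * g * r)
        = a * g * (r * r * (g * (star a * a) * g) * r) := by
          rw [hstarv]; simp only [mul_assoc]
      _ = a * g * (r * r * (s - p) * r) := by rw [hmid]
      _ = a * g * ((1 - p) * r) := by
          have hrr : r * r * (s - p) = 1 - p := by rw [mul_sub, key1, key4]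
          rw [hrr]
      _ = a * g * r := by
          rw [← hg, mul_assoc, ← mul_assoc g g r, hgg, ← mul_assoc]
  · -- maps to u
    rw [map_mul, map_mul, hqr, mul_one, hg, map_sub, map_one, hqp, sub_zero,
      mul_one, ha]
end
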